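/- (End-to-end exactness of OmniFC distance reconstruction for integer data.) Let p be an odd prime and F = ZMod p. Let α : Fin (l+t) → F be injective and β : Fin m → F be injective with range disjoint from the range of α, and suppose m ≥ 2l + 2t − 1. Let s, s' : Fin l → (Fin r → ℤ) be integer data segments whose total squared distance D = Σ_{o < l} Σ_{k ∈ Fin r} (s o k − s' o k)² satisfies D < (p−1)/2. Let x, y : Fin (l+t) → (Fin r → F) be any segment families whose first l entries are the mod-p reductions of s and s' respectively (their last t noise entries arbitrary). Let h ∈ F[X] be the Lagrange interpolation polynomial of degree ≤ m − 1 through the points (β j, dis(f_x(β j), f_y(β j))) for j ∈ Fin m. Then (Σ_{o < l} h(α o)).val = D; that is, the server's decoded reconstruction exactly equals the true integer squared distance between the concatenated data vectors. -/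

import Mathlib

/-- Lagrange encoding of a segment family `x : Fin N → (Fin r → F)` at point `γ`. -/
noncomputable def enc {F : Type*} [Field F] {N r : ℕ} (α : Fin N → F)
    (x : Fin N → Fin r → F) (γ : F) : Fin r → F :=
  ∑ o, (∏ o' ∈ Finset.univ.erase o, (γ - α o') / (α o - α o')) • x o

/-- Squared distance between two vectors. -/
def dis {F : Type*} [Field F] {r : ℕ} (u v : Fin r → F) : F :=
  ∑ k, (u k - v k) ^ 2

open Polynomial

-- eval of interpolate as explicit sum
lemma eval_interp {F : Type*} [Field F] {N : ℕ} (v : Fin N → F) (c : Fin N → F) (γ : F) :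
    (Lagrange.interpolate Finset.univ v c).eval γ
      = ∑ o, (∏ o' ∈ Finset.univ.erase o, (γ - v o') / (v o - v o')) * c o := by
  rw [Lagrange.interpolate_apply]
  simp only [eval_finset_sum, eval_mul, eval_C, Lagrange.basis, eval_prod,
    Lagrange.basisDivisor, eval_mul, eval_C, eval_sub, eval_X]
  refine Finset.sum_congr rfl fun o _ => ?_
  rw [mul_comm]
  congr 1
  refine Finset.prod_congr rfl fun o' _ => ?_
  rw [div_eq_mul_inv, mul_comm]

lemma enc_eval {F : Type*} [Field F] {N r : ℕ} (α : Fin N → F)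
    (x : Fin N → Fin r → F) (γ : F) (k : Fin r) :
    enc α x γ k = (Lagrange.interpolate Finset.univ α (fun o => x o k)).eval γ := by
  rw [eval_interp, enc]
  simp [Finset.sum_apply]

/-- End-to-end exactness of OmniFC distance reconstruction for integer data: the server's
decoded reconstruction equals the true integer squared distance between the concatenated
data vectors. -/
theorem omniFC_end_to_end_exactness
    {p : ℕ} [Fact p.Prime] (hodd : Odd p) {l t r m : ℕ}
    (hl : 1 ≤ l) (ht : 1 ≤ t) (hr : 1 ≤ r)
    (α : Fin (l + t) → ZMod p) (hα : Function.Injective α)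
    (β : Fin m → ZMod p) (hβ : Function.Injective β)
    (hdisj : Disjoint (Set.range β) (Set.range α))
    (hm : 2 * l + 2 * t - 1 ≤ m)
    (s s' : Fin l → Fin r → ℤ)
    (hD : ∑ o : Fin l, ∑ k, (s o k - s' o k) ^ 2 < (((p - 1) / 2 : ℕ) : ℤ))
    (x y : Fin (l + t) → Fin r → ZMod p)
    (hx : ∀ o : Fin l, x (Fin.castAdd t o) = fun k => ((s o k : ZMod p)))
    (hy : ∀ o : Fin l, y (Fin.castAdd t o) = fun k => ((s' o k : ZMod p)))
    (h : ZMod p → ZMod p)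
    (hh : ∀ γ : ZMod p, h γ = ∑ j, dis (enc α x (β j)) (enc α y (β j)) *
        ∏ j' ∈ Finset.univ.erase j, (γ - β j') / (β j - β j')) :
    (((∑ o : Fin l, h (α (Fin.castAdd t o))).val : ℤ)) =
      ∑ o : Fin l, ∑ k, (s o k - s' o k) ^ 2 := by
  have hαinj : Set.InjOn α (Finset.univ : Finset (Fin (l+t))) := fun a _ b _ hab => hα hab
  have hβinj : Set.InjOn β (Finset.univ : Finset (Fin m)) := fun a _ b _ hab => hβ hab
  set Ex : Fin r → (ZMod p)[X] :=
    fun k => Lagrange.interpolate Finset.univ α (fun o => x o k) with hEx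
  set Ey : Fin r → (ZMod p)[X] :=
    fun k => Lagrange.interpolate Finset.univ α (fun o => y o k) with hEy
  set P : (ZMod p)[X] := ∑ k, (Ex k - Ey k) ^ 2 with hP
  have hevalP : ∀ γ, P.eval γ = dis (enc α x γ) (enc α y γ) := by
    intro γ
    rw [hP, eval_finset_sum, dis]
    refine Finset.sum_congr rfl fun k _ => ?_
    rw [eval_pow, eval_sub, enc_eval α x γ k, enc_eval α y γ k]
  -- degree bound on P
  have hdegP : P.degree < (m : ℕ) := by
    have hnat : P.natDegree < m := by
      have h1 : ∀ k : Fin r, (Ex k - Ey k).natDegree ≤ l + t - 1 := by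
        intro k
        have hx' : (Ex k).degree < (l + t : ℕ) := by
          simpa [hEx] using Lagrange.degree_interpolate_lt (fun o => x o k) hαinj
        have hy' : (Ey k).degree < (l + t : ℕ) := by
          simpa [hEy] using Lagrange.degree_interpolate_lt (fun o => y o k) hαinj
        have : (Ex k - Ey k).degree < (l + t : ℕ) :=
          lt_of_le_of_lt (Polynomial.degree_sub_le _ _) (max_lt hx' hy')
        have h2 : (Ex k - Ey k).degree ≤ ((l + t - 1 : ℕ) : WithBot ℕ) := by
          rcases eq_or_ne (Ex k - Ey k) 0 with h0 | h0
          · simp [h0]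
          · rw [Polynomial.degree_eq_natDegree h0] at this ⊢
            exact_mod_cast Nat.le_pred_of_lt (by exact_mod_cast this)
        exact Polynomial.natDegree_le_iff_degree_le.mpr h2
      calc P.natDegree ≤ Finset.univ.sup (fun k : Fin r => ((Ex k - Ey k)^2).natDegree) :=
            Polynomial.natDegree_sum_le_of_forall_le _ _ (fun k _ =>
              Finset.le_sup (f := fun k => ((Ex k - Ey k)^2).natDegree) (Finset.mem_univ k))
        _ ≤ 2 * (l + t - 1) := by
            refine Finset.sup_le fun k _ => ?_
            calc ((Ex k - Ey k)^2).natDegree ≤ 2 * (Ex k - Ey k).natDegree :=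
                  Polynomial.natDegree_pow_le
              _ ≤ 2 * (l + t - 1) := Nat.mul_le_mul_left 2 (h1 k)
        _ < m := by omega
    calc P.degree ≤ (P.natDegree : WithBot ℕ) := Polynomial.degree_le_natDegree
      _ < (m : ℕ) := by exact_mod_cast hnat
  -- h = eval of P
  have hhP : ∀ γ, h γ = P.eval γ := by
    intro γ
    have key : Lagrange.interpolate Finset.univ β (fun j => P.eval (β j)) = P := by
      have := Lagrange.eq_interpolate hβinj (f := P) (by simpa using hdegP)
      exact this.symm
    have : h γ = (Lagrange.interpolate Finset.univ β (fun j => P.eval (β j))).eval γ := by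
      rw [hh, eval_interp]
      refine Finset.sum_congr rfl fun j _ => ?_
      rw [mul_comm, hevalP]
    rw [this, key]
  -- evaluate at nodes
  have hnode : ∀ o : Fin l,
      h (α (Fin.castAdd t o)) = ((∑ k, (s o k - s' o k) ^ 2 : ℤ) : ZMod p) := by
    intro o
    rw [hhP, hevalP]
    have hxnode : ∀ k, enc α x (α (Fin.castAdd t o)) k = x (Fin.castAdd t o) k := by
      intro k
      rw [enc_eval]
      exact Lagrange.eval_interpolate_at_node _ hαinj (Finset.mem_univ _)
    have hynode : ∀ k, enc α y (α (Fin.castAdd t o)) k = y (Fin.castAdd t o) k := by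
      intro k
      rw [enc_eval]
      exact Lagrange.eval_interpolate_at_node _ hαinj (Finset.mem_univ _)
    rw [dis]
    push_cast
    refine Finset.sum_congr rfl fun k _ => ?_
    rw [hxnode, hynode, hx, hy]
  have hsum : (∑ o : Fin l, h (α (Fin.castAdd t o)))
      = ((∑ o : Fin l, ∑ k, (s o k - s' o k) ^ 2 : ℤ) : ZMod p) := by
    simp only [hnode]
    rw [Int.cast_sum]
  set D : ℤ := ∑ o : Fin l, ∑ k, (s o k - s' o k) ^ 2 with hDdef
  clear_value D
  have hD0 : 0 ≤ D := by
    rw [hDdef]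
    exact Finset.sum_nonneg fun o _ => Finset.sum_nonneg fun k _ => sq_nonneg _
  have hp2 : 2 ≤ p := (Fact.out : p.Prime).two_le
  have hDp : D < (p : ℤ) := by
    have : ((p - 1) / 2 : ℕ) ≤ p := le_trans (Nat.div_le_self _ _) (Nat.sub_le _ _)
    calc D < (((p - 1) / 2 : ℕ) : ℤ) := hD
      _ ≤ (p : ℤ) := by exact_mod_cast this
  rw [hsum]
  obtain ⟨n, rfl⟩ : ∃ n : ℕ, D = (n : ℤ) := ⟨D.toNat, (Int.toNat_of_nonneg hD0).symm⟩
  have hnp : n < p := by exact_mod_cast hDp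
  rw [Int.cast_natCast, ZMod.val_natCast_of_lt hnp]
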